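/- Let G be an m×n matrix over F_q such that every nonzero x ∈ F_q^m satisfies wt(x·G) ≥ t + 1, set W = G^T, and let A ⊆ {1,…,n} with |A| = m be such that rank(W_A) = m and rank(W_{A^c}) = k = n − m (the scheme is proper). Let G_r be an m×N matrix over F_q with full row rank m, and consider the concatenated encoder c = u·W·G_r ∈ F_q^N. Then: (i) for u uniformly distributed on F_q^n and every B ⊆ {1,…,n} with |B| ≤ t, the vector (u_i)_{i∈B} is independent of c (t-threshold security is preserved); and (ii) for μ uniform on F_q^m and κ uniform on F_q^k independent of μ, the codeword c = (μ·W_A + κ·W_{A^c})·G_r is independent of κ (key security is preserved). -/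

import Mathlib

open Matrix

/-- Master counting lemma: if `σ` kills `f` while preserving `g`, then `f` and `g` are
independent in the counting sense. -/
lemma count_indep {V X Y : Type} [Fintype V] [DecidableEq V]
    [AddCommGroup V] [AddCommGroup X] [AddCommGroup Y] [DecidableEq X] [DecidableEq Y]
    (f : V → X) (g : V → Y)
    (hf : ∀ v w, f (v + w) = f v + f w) (hg : ∀ v w, g (v + w) = g v + g w)
    (σ : V → V) (hσf : ∀ v, f (σ v) = 0) (hσg : ∀ v, g (σ v) = g v)
    (a : Y) (c : X) :
    (Finset.univ.filter fun v => g v = a ∧ f v = c).card * Fintype.card V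
      = (Finset.univ.filter fun v => g v = a).card
        * (Finset.univ.filter fun v => f v = c).card := by
  have hf' : ∀ v w, f (v - w) = f v - f w := by
    intro v w
    have := hf (v - w) w
    rw [sub_add_cancel] at this
    rw [eq_sub_iff_add_eq, ← this]
  have hg' : ∀ v w, g (v - w) = g v - g w := by
    intro v w
    have := hg (v - w) w
    rw [sub_add_cancel] at this
    rw [eq_sub_iff_add_eq, ← this]
  have h1 : (Finset.univ.filter fun p : V × V => g p.1 = a ∧ f p.1 = c)
      = (Finset.univ.filter fun v => g v = a ∧ f v = c) ×ˢ Finset.univ := by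
    ext p; simp [Finset.mem_product]
  have h2 : (Finset.univ.filter fun p : V × V => g p.1 = a ∧ f p.2 = c)
      = (Finset.univ.filter fun v => g v = a) ×ˢ (Finset.univ.filter fun v => f v = c) := by
    ext p; simp [Finset.mem_product]
  have key : (Finset.univ.filter fun p : V × V => g p.1 = a ∧ f p.2 = c).card
      = (Finset.univ.filter fun p : V × V => g p.1 = a ∧ f p.1 = c).card := by
    refine Finset.card_bij' (fun p _ => (p.2 + σ (p.1 - p.2), p.1 - p.2))
      (fun q _ => (q.2 + (q.1 - σ q.2), q.1 - σ q.2)) ?_ ?_ ?_ ?_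
    · intro p hp
      simp only [Finset.mem_filter, Finset.mem_univ, true_and] at hp ⊢
      constructor
      · rw [hg, hσg, hg', hp.1]; abel
      · rw [hf, hσf, hp.2]; abel
    · intro q hq
      simp only [Finset.mem_filter, Finset.mem_univ, true_and] at hq ⊢
      constructor
      · rw [hg, hg', hσg, hq.1]; abel
      · rw [hf', hσf, hq.2]; abel
    · intro p _; ext <;> simp
    · intro q _; ext <;> simp
  calc (Finset.univ.filter fun v => g v = a ∧ f v = c).card * Fintype.card V
      = (Finset.univ.filter fun p : V × V => g p.1 = a ∧ f p.1 = c).card := by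
        rw [h1, Finset.card_product, Finset.card_univ]
    _ = (Finset.univ.filter fun p : V × V => g p.1 = a ∧ f p.2 = c).card := key.symm
    _ = _ := by rw [h2, Finset.card_product]

lemma mulVec_surj_of_rank {F : Type} [Field F] {ι κ : Type} [Fintype ι] [Fintype κ]
    (M : Matrix ι κ F) (h : M.rank = Fintype.card ι) :
    Function.Surjective M.mulVec := by
  have hr : LinearMap.range M.mulVecLin = ⊤ := by
    apply Submodule.eq_top_of_finrank_eq
    rw [← Matrix.rank, h, Module.finrank_pi]
  intro y
  obtain ⟨x, hx⟩ := LinearMap.range_eq_top.1 hr y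
  exact ⟨x, hx⟩

lemma mulVec_surj_of_li {F : Type} [Field F] {ι κ : Type} [Fintype ι] [Fintype κ]
    (M : Matrix ι κ F) (h : LinearIndependent F (fun i => M i)) :
    Function.Surjective M.mulVec := by
  apply mulVec_surj_of_rank
  rw [← Matrix.rank_transpose]
  unfold Matrix.rank
  rw [← Matrix.vecMulLinear_transpose, Matrix.transpose_transpose, range_vecMulLinear,
    finrank_span_eq_card (show LinearIndependent F M.row from h)]

/-- A vector in the kernel of `G` can take arbitrary prescribed values on any `t`
coordinates, when all nonzero codewords of `G` have weight `≥ t + 1`. -/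
lemma ker_extend {F : Type} [Field F] [Fintype F] [DecidableEq F]
    {m n t : ℕ} (G : Matrix (Fin m) (Fin n) F)
    (hmin : ∀ x : Fin m → F, x ≠ 0 →
      t + 1 ≤ (Finset.univ.filter (fun j : Fin n => Matrix.vecMul x G j ≠ 0)).card)
    (B : Finset (Fin n)) (hB : B.card ≤ t) (u : Fin n → F) :
    ∃ w : Fin n → F, G *ᵥ w = 0 ∧ ∀ i : {i // i ∈ B}, w i.1 = u i.1 := by
  set M : Matrix (Fin m ⊕ {i // i ∈ B}) (Fin n) F :=
    Matrix.of (Sum.elim (fun i j => G i j)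
      (fun (b : {i // i ∈ B}) j => if (b : Fin n) = j then (1 : F) else 0)) with hM
  have hli : LinearIndependent F (fun r => M r) := by
    rw [Fintype.linearIndependent_iff]
    intro γ hsum
    have hj : ∀ j : Fin n, (∑ i : Fin m, γ (Sum.inl i) * G i j)
        + (∑ b : {i // i ∈ B}, γ (Sum.inr b) * (if (b : Fin n) = j then (1:F) else 0)) = 0 := by
      intro j
      have := congr_fun hsum j
      simpa [Fintype.sum_sum_type, hM] using this
    set x : Fin m → F := fun i => γ (Sum.inl i) with hxdef
    have hx : x = 0 := by
      by_contra hx0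
      have hsupp : (Finset.univ.filter (fun j : Fin n => Matrix.vecMul x G j ≠ 0)) ⊆ B := by
        intro j hj'
        simp only [Finset.mem_filter] at hj'
        by_contra hjB
        apply hj'.2
        have h2 : (∑ b : {i // i ∈ B}, γ (Sum.inr b) * (if (b : Fin n) = j then (1:F) else 0)) = 0 := by
          apply Finset.sum_eq_zero
          intro b _
          have : (b : Fin n) ≠ j := fun h => hjB (h ▸ b.2)
          simp [this]
        have := hj j
        rw [h2, add_zero] at this
        simpa [Matrix.vecMul, dotProduct, hxdef] using this
      have := (hmin x hx0).trans (Finset.card_le_card hsupp)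
      omega
    intro r
    rcases r with i | b
    · exact congr_fun hx i
    · have := hj b.1
      have h1 : (∑ i : Fin m, γ (Sum.inl i) * G i b.1) = 0 := by
        apply Finset.sum_eq_zero
        intro i _
        have : γ (Sum.inl i) = 0 := congr_fun hx i
        rw [this, zero_mul]
      rw [h1, zero_add] at this
      have h2 : (∑ b' : {i // i ∈ B}, γ (Sum.inr b') * (if (b' : Fin n) = (b:Fin n) then (1:F) else 0))
          = γ (Sum.inr b) := by
        rw [Finset.sum_eq_single b]
        · simp
        · intro b' _ hne
          have : (b' : Fin n) ≠ (b : Fin n) := fun h => hne (Subtype.ext h)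
          simp [this]
        · simp
      rw [h2] at this
      exact this
  obtain ⟨w, hw⟩ := mulVec_surj_of_li M hli (Sum.elim 0 (fun b => u b.1))
  refine ⟨w, ?_, ?_⟩
  · funext i
    have := congr_fun hw (Sum.inl i)
    simpa [hM, Matrix.mulVec, dotProduct] using this
  · intro b
    have := congr_fun hw (Sum.inr b)
    simpa [hM, Matrix.mulVec, dotProduct, ite_mul] using this

/-- Concatenation preserves threshold and key security.  Let `G` be an
`m × n` matrix over `F` whose nonzero codewords have weight `≥ t + 1`, set `W = Gᵀ`, and let
`A` (`|A| = m`) be such that the scheme is proper (`rank W_A = m`, `rank W_{Aᶜ} = k`,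
`k = n - m`).  Let `G_r` be a full-row-rank `m × N` inner generator matrix and consider the
concatenated encoder `c = u·W·G_r`.  Then (i) for `u` uniform on `F^n` and every `B` with
`|B| ≤ t`, `(uᵢ)_{i ∈ B}` is independent of `c`; and (ii) for independent uniform `μ, κ`,
the codeword `c = (μ·W_A + κ·W_{Aᶜ})·G_r` is independent of `κ`.  Independence under the
uniform distribution is expressed by counting. -/
theorem stmt_15 {F : Type} [Field F] [Fintype F] [DecidableEq F]
    (m k n N t : ℕ) (hn : n = m + k)
    (G : Matrix (Fin m) (Fin n) F)
    (hmin : ∀ x : Fin m → F, x ≠ 0 →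
      t + 1 ≤ (Finset.univ.filter (fun j : Fin n => Matrix.vecMul x G j ≠ 0)).card)
    (A : Finset (Fin n)) (hA : A.card = m)
    (hWA : (Gᵀ.submatrix (Subtype.val : {i // i ∈ A} → Fin n) id).rank = m)
    (hWAc : (Gᵀ.submatrix (Subtype.val : {i // i ∈ Aᶜ} → Fin n) id).rank = k)
    (Gr : Matrix (Fin m) (Fin N) F) (hGr : Gr.rank = m) :
    (∀ B : Finset (Fin n), B.card ≤ t →
      ∀ (a : {i // i ∈ B} → F) (c : Fin N → F),
        (Finset.univ.filter (fun u : Fin n → F =>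
            (fun i : {i // i ∈ B} => u i.1) = a
              ∧ Matrix.vecMul (Matrix.vecMul u Gᵀ) Gr = c)).card
          * Fintype.card (Fin n → F)
        = (Finset.univ.filter (fun u : Fin n → F =>
            (fun i : {i // i ∈ B} => u i.1) = a)).card
          * (Finset.univ.filter (fun u : Fin n → F =>
            Matrix.vecMul (Matrix.vecMul u Gᵀ) Gr = c)).card)
    ∧ (∀ (c : Fin N → F) (κ : {i // i ∈ Aᶜ} → F),
        (Finset.univ.filter (fun p : ({i // i ∈ A} → F) × ({i // i ∈ Aᶜ} → F) =>
            Matrix.vecMul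
              (Matrix.vecMul p.1 (Gᵀ.submatrix (Subtype.val : {i // i ∈ A} → Fin n) id)
                + Matrix.vecMul p.2 (Gᵀ.submatrix (Subtype.val : {i // i ∈ Aᶜ} → Fin n) id))
              Gr = c ∧ p.2 = κ)).card
          * Fintype.card (({i // i ∈ A} → F) × ({i // i ∈ Aᶜ} → F))
        = (Finset.univ.filter (fun p : ({i // i ∈ A} → F) × ({i // i ∈ Aᶜ} → F) =>
            Matrix.vecMul
              (Matrix.vecMul p.1 (Gᵀ.submatrix (Subtype.val : {i // i ∈ A} → Fin n) id)
                + Matrix.vecMul p.2 (Gᵀ.submatrix (Subtype.val : {i // i ∈ Aᶜ} → Fin n) id))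
              Gr = c)).card
          * (Finset.univ.filter (fun p : ({i // i ∈ A} → F) × ({i // i ∈ Aᶜ} → F) =>
              p.2 = κ)).card) := by
  constructor
  · -- part (i): threshold security
    intro B hB a c
    have hex : ∀ u : Fin n → F,
        ∃ w : Fin n → F, G *ᵥ w = 0 ∧ ∀ i : {i // i ∈ B}, w i.1 = u i.1 :=
      fun u => ker_extend G hmin B hB u
    set σ : (Fin n → F) → (Fin n → F) := fun u => (hex u).choose with hσ
    have hσf : ∀ u, Matrix.vecMul (Matrix.vecMul (σ u) Gᵀ) Gr = 0 := by
      intro u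
      have h0 : Matrix.vecMul (σ u) Gᵀ = 0 := by
        rw [Matrix.vecMul_transpose]
        exact (hex u).choose_spec.1
      rw [h0, Matrix.zero_vecMul]
    have hσg : ∀ u, (fun i : {i // i ∈ B} => (σ u) i.1) = (fun i : {i // i ∈ B} => u i.1) := by
      intro u
      funext i
      exact (hex u).choose_spec.2 i
    exact count_indep (fun u => Matrix.vecMul (Matrix.vecMul u Gᵀ) Gr)
      (fun u => fun i : {i // i ∈ B} => u i.1)
      (fun v w => by
        show Matrix.vecMul (Matrix.vecMul (v + w) Gᵀ) Gr = _
        rw [Matrix.add_vecMul, Matrix.add_vecMul])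
      (fun v w => rfl)
      σ hσf hσg a c
  · -- part (ii): key security
    intro c κ
    set WA := Gᵀ.submatrix (Subtype.val : {i // i ∈ A} → Fin n) id with hWAdef
    set WAc := Gᵀ.submatrix (Subtype.val : {i // i ∈ Aᶜ} → Fin n) id with hWAcdef
    have hsurj : Function.Surjective (fun x : {i // i ∈ A} → F => Matrix.vecMul x WA) := by
      have h1 : Function.Surjective (WAᵀ).mulVec := by
        apply mulVec_surj_of_rank
        rw [Matrix.rank_transpose, hWA, Fintype.card_fin]
      intro y
      obtain ⟨x, hx⟩ := h1 y
      exact ⟨x, by rw [← Matrix.vecMul_transpose, Matrix.transpose_transpose] at hx; exact hx⟩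
    set σ : ({i // i ∈ A} → F) × ({i // i ∈ Aᶜ} → F) →
        ({i // i ∈ A} → F) × ({i // i ∈ Aᶜ} → F) :=
      fun p => ((hsurj (-(Matrix.vecMul p.2 WAc))).choose, p.2) with hσ
    have hσf : ∀ p, Matrix.vecMul
        (Matrix.vecMul (σ p).1 WA + Matrix.vecMul (σ p).2 WAc) Gr = 0 := by
      intro p
      have h0 : Matrix.vecMul (σ p).1 WA = -(Matrix.vecMul p.2 WAc) :=
        (hsurj (-(Matrix.vecMul p.2 WAc))).choose_spec
      have h1 : (σ p).2 = p.2 := rfl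
      rw [h0, h1, neg_add_cancel, Matrix.zero_vecMul]
    have hf : ∀ p q : ({i // i ∈ A} → F) × ({i // i ∈ Aᶜ} → F),
        Matrix.vecMul (Matrix.vecMul (p + q).1 WA + Matrix.vecMul (p + q).2 WAc) Gr
          = Matrix.vecMul (Matrix.vecMul p.1 WA + Matrix.vecMul p.2 WAc) Gr
            + Matrix.vecMul (Matrix.vecMul q.1 WA + Matrix.vecMul q.2 WAc) Gr := by
      intro p q
      have : Matrix.vecMul (p + q).1 WA + Matrix.vecMul (p + q).2 WAc
          = (Matrix.vecMul p.1 WA + Matrix.vecMul p.2 WAc)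
            + (Matrix.vecMul q.1 WA + Matrix.vecMul q.2 WAc) := by
        show Matrix.vecMul (p.1 + q.1) WA + Matrix.vecMul (p.2 + q.2) WAc = _
        rw [Matrix.add_vecMul, Matrix.add_vecMul]
        abel
      rw [this, Matrix.add_vecMul]
    have e1 : (Finset.univ.filter (fun p : ({i // i ∈ A} → F) × ({i // i ∈ Aᶜ} → F) =>
          Matrix.vecMul (Matrix.vecMul p.1 WA + Matrix.vecMul p.2 WAc) Gr = c ∧ p.2 = κ))
        = (Finset.univ.filter (fun p : ({i // i ∈ A} → F) × ({i // i ∈ Aᶜ} → F) =>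
          p.2 = κ ∧ Matrix.vecMul (Matrix.vecMul p.1 WA + Matrix.vecMul p.2 WAc) Gr = c)) := by
      ext p
      simp only [Finset.mem_filter]
      tauto
    rw [e1]
    exact (count_indep
      (fun p : ({i // i ∈ A} → F) × ({i // i ∈ Aᶜ} → F) =>
        Matrix.vecMul (Matrix.vecMul p.1 WA + Matrix.vecMul p.2 WAc) Gr)
      (fun p => p.2) hf (fun p q => rfl) σ hσf (fun p => rfl) κ c).trans (mul_comm _ _)
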